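/- For every natural number k ≥ 1, the formal power series Σ_{n≥0} r_{2k}(n)·x^{n+k-1} equals ∏_{j=0}^{k-1} (j!/(k+j)!) times the power series expansion at 0 of the rational function F_k^k(x). -/

import Mathlib

/-- The value `r_k(n) = ∏_{j=1}^k ((n+j)/j)^(min(j,k-j))` of the polynomial `r_k`
at the natural number `n`. -/
def rVal (k n : ℕ) : ℚ :=
  ∏ j ∈ Finset.Icc 1 k, (((n : ℚ) + (j : ℚ)) / (j : ℚ)) ^ (min j (k - j))

/-- The power series expansion at `0` of the rational function `F_a^b(x)`, obtained by
applying the operator `X^(a-1) D^a` (first differentiate `a` times, then multiply by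
`x^(a-1)`) `b` times to `1/(1-x)`. -/
noncomputable def Fab (a b : ℕ) : PowerSeries ℚ :=
  (fun f => PowerSeries.X ^ (a - 1) * (PowerSeries.derivativeFun^[a] f))^[b]
    ((1 - PowerSeries.X : PowerSeries ℚ)⁻¹)

open Finset PowerSeries

private lemma asc_prod' (m : ℕ) : ∀ k, m.ascFactorial k = ∏ t ∈ range k, (m + t)
  | 0 => rfl
  | k + 1 => by rw [Nat.ascFactorial_succ, prod_range_succ, asc_prod' m k, mul_comm]

private lemma card_fiber' (k j : ℕ) :
    (((range k ×ˢ range k).filter fun p => p.1 + p.2 + 1 = j)).card = min j (2 * k - j) := by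
  cases j with
  | zero =>
      rw [Finset.filter_false_of_mem (by omega), Finset.card_empty]
      omega
  | succ j' =>
      have himg : ((range k ×ˢ range k).filter fun p => p.1 + p.2 + 1 = j' + 1)
          = (Finset.Icc (j' + 1 - k) (min j' (k - 1))).image (fun i => (i, j' - i)) := by
        ext p
        simp only [Finset.mem_filter, Finset.mem_product, Finset.mem_range, Finset.mem_image,
          Finset.mem_Icc]
        constructor
        · rintro ⟨⟨h1, h2⟩, h3⟩
          refine ⟨p.1, by omega, ?_⟩
          rw [Prod.ext_iff]
          refine ⟨rfl, ?_⟩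
          simp only []
          omega
        · rintro ⟨i, hi, rfl⟩
          refine ⟨⟨by omega, by simp; omega⟩, by simp; omega⟩
      rw [himg, Finset.card_image_of_injOn (fun a _ b _ h => by
        simpa using congrArg Prod.fst h), Nat.card_Icc]
      omega

private lemma prodA' (k n : ℕ) :
    ∏ j ∈ Finset.Icc 1 (2 * k), (n + j) ^ (min j (2 * k - j))
      = ∏ i ∈ range k, (n + i + 1).ascFactorial k := by
  have hmem : ∀ p ∈ range k ×ˢ range k, p.1 + p.2 + 1 ∈ Finset.Icc 1 (2 * k) := by
    rintro ⟨a, b⟩ hp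
    simp only [Finset.mem_product, Finset.mem_range] at hp
    simp only [Finset.mem_Icc]
    omega
  have := Finset.prod_fiberwise_of_maps_to' hmem (fun j => n + j)
  calc ∏ j ∈ Finset.Icc 1 (2 * k), (n + j) ^ (min j (2 * k - j))
      = ∏ j ∈ Finset.Icc 1 (2 * k),
          ∏ _p ∈ (range k ×ˢ range k).filter fun p => p.1 + p.2 + 1 = j, (n + j) := by
        refine Finset.prod_congr rfl fun j _ => ?_
        rw [Finset.prod_const, card_fiber']
    _ = ∏ p ∈ range k ×ˢ range k, (n + (p.1 + p.2 + 1)) := this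
    _ = ∏ i ∈ range k, ∏ t ∈ range k, (n + (i + t + 1)) := Finset.prod_product _ _ _
    _ = ∏ i ∈ range k, (n + i + 1).ascFactorial k := by
        refine Finset.prod_congr rfl fun i _ => ?_
        rw [asc_prod']
        exact Finset.prod_congr rfl fun t _ => by ring

private lemma prodC' (k : ℕ) :
    ∏ j ∈ range k, (k + j).factorial
      = (∏ j ∈ range k, j.factorial) * ∏ i ∈ range k, (i + 1).ascFactorial k := by
  rw [← Finset.prod_mul_distrib]
  exact Finset.prod_congr rfl fun j _ => by
    rw [Nat.factorial_mul_ascFactorial, Nat.add_comm]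

private lemma rVal_eq' (k n : ℕ) :
    rVal (2 * k) n = (∏ j ∈ range k, (j.factorial : ℚ) / ((k + j).factorial : ℚ))
      * ∏ i ∈ range k, ((n + i + 1).ascFactorial k : ℚ) := by
  have hB : (0 : ℚ) < ∏ i ∈ range k, ((i + 1).ascFactorial k : ℚ) := by
    apply Finset.prod_pos
    intro i _
    exact_mod_cast Nat.ascFactorial_pos i k
  have hF : (0 : ℚ) < ∏ j ∈ range k, (j.factorial : ℚ) := by
    apply Finset.prod_pos
    intro i _
    exact_mod_cast Nat.factorial_pos i
  have hL : rVal (2 * k) n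
      = ((∏ i ∈ range k, (n + i + 1).ascFactorial k : ℕ) : ℚ)
        / ((∏ i ∈ range k, (i + 1).ascFactorial k : ℕ) : ℚ) := by
    have hA0 := prodA' k 0
    simp only [Nat.zero_add] at hA0
    rw [rVal]
    simp only [div_pow]
    rw [Finset.prod_div_distrib, ← prodA' k n, ← hA0]
    push_cast
    rfl
  rw [hL, Finset.prod_div_distrib]
  rw [show ∏ j ∈ range k, ((k + j).factorial : ℚ)
      = (∏ j ∈ range k, (j.factorial : ℚ)) * ∏ i ∈ range k, ((i + 1).ascFactorial k : ℚ) by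
    rw [← Nat.cast_prod, prodC']; push_cast; ring]
  push_cast
  field_simp

private lemma Fab_succ' (a b : ℕ) :
    Fab a (b + 1) = PowerSeries.X ^ (a - 1) * (PowerSeries.derivativeFun^[a] (Fab a b)) :=
  Function.iterate_succ_apply' _ _ _

private lemma inv_one_sub_eq' : ((1 - X : ℚ⟦X⟧)⁻¹) = PowerSeries.mk 1 := by
  rw [PowerSeries.inv_eq_iff_mul_eq_one]
  · exact mk_one_mul_one_sub_eq_one ℚ
  · simp

private lemma coeff_iter_deriv' (a : ℕ) : ∀ (f : ℚ⟦X⟧) (m : ℕ),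
    coeff m (derivativeFun^[a] f) = ((m + 1).ascFactorial a : ℚ) * coeff (m + a) f := by
  induction a with
  | zero => intro f m; simp
  | succ a ih =>
      intro f m
      rw [Function.iterate_succ_apply, ih,
        show coeff (m + a) (derivativeFun f) = coeff (m + a + 1) f * ((m + a : ℕ) + 1) from
          coeff_derivative f (m + a), Nat.ascFactorial_succ]
      rw [show m + 1 + a = m + (a + 1) by omega]
      push_cast
      ring_nf

private lemma coeff_Fab' (k : ℕ) (hk : 1 ≤ k) (b : ℕ) : ∀ n : ℕ,
    coeff (k - 1 + n) (Fab k b) = ∏ i ∈ range b, ((n + i + 1).ascFactorial k : ℚ) := by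
  induction b with
  | zero => intro n; simp [Fab, inv_one_sub_eq', coeff_mk]
  | succ b ih =>
      intro n
      rw [Fab_succ', add_comm (k - 1) n, coeff_X_pow_mul, coeff_iter_deriv',
        show n + k = k - 1 + (n + 1) by omega, ih (n + 1), Finset.prod_range_succ']
      have h : ∀ i : ℕ, n + 1 + i + 1 = n + (i + 1) + 1 := fun i => by omega
      simp only [h, Nat.add_zero]
      ring

private lemma coeff_Fab_lt' (k b m : ℕ) (hm : m < k - 1) : coeff m (Fab k (b + 1)) = 0 := by
  rw [Fab_succ', coeff_X_pow_mul', if_neg (by omega)]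

/-- For `k ≥ 1`, the formal power series `Σ_{n ≥ 0} r_{2k}(n)·x^(n+k-1)` equals
`∏_{j=0}^{k-1} (j!/(k+j)!)` times the power series expansion at `0` of `F_k^k(x)`. -/
theorem stmt12 (k : ℕ) (hk : 1 ≤ k) :
    (PowerSeries.mk fun m => if k - 1 ≤ m then rVal (2 * k) (m - (k - 1)) else 0)
      = PowerSeries.C
          (∏ j ∈ Finset.range k, (j.factorial : ℚ) / ((k + j).factorial : ℚ))
        * Fab k k := by
  ext m
  rw [coeff_mk, PowerSeries.coeff_C_mul]
  by_cases hm : k - 1 ≤ m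
  · rw [if_pos hm]
    rw [show m = k - 1 + (m - (k - 1)) by omega, Nat.add_sub_cancel_left,
      coeff_Fab' k hk k (m - (k - 1))]
    exact rVal_eq' k (m - (k - 1))
  · rw [if_neg hm]
    obtain ⟨b, rfl⟩ : ∃ b, k = b + 1 := ⟨k - 1, by omega⟩
    rw [coeff_Fab_lt' _ _ _ (by omega), mul_zero]
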